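/- Let G = (V, E, R, c) be a relational hypergraph and q = (q, ũ, t) a query such that the coloring c satisfies generalized target node distinguishability with respect to q. Then for every L ≥ 0 there exists an HC-MPNN with L layers such that for all 0 ≤ ℓ ≤ L, hrwl_1^(ℓ) ≡ h_q^(ℓ) (the WL coloring initialized at c and the conditioned feature map induce the same partition of V at every layer). -/

import Mathlib

/-- A relational hypergraph over node set `V`, relation types `R` with arities `ar`.
A hyperedge (fact) `r(u₁,…,u_k)` is a pair of a relation type `r` and the tuple of
its nodes, of length `k = ar r`. -/
structure RelHG (V R : Type) (ar : R → ℕ) where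
  edges : Finset (Σ r : R, Fin (ar r) → V)

variable {V R D : Type} {ar : R → ℕ}

/-- `E(v)`: the set of edge–position pairs `(e, i)` with `e(i) = v`. -/
def RelHG.incid [DecidableEq V] (H : RelHG V R ar) (v : V) :
    Finset (Σ e : Σ r : R, Fin (ar r) → V, Fin (ar e.1)) :=
  (H.edges.sigma fun e => (Finset.univ : Finset (Fin (ar e.1)))).filter
    fun p => p.1.2 p.2 = v

/-- Colors used by the canonical (`τ = id`) hypergraph relational 1-WL test after `ℓ`
rounds, starting from colors in `D`. -/
def WLC (D R : Type) : ℕ → Type :=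
  fun ℓ => Nat.rec D (fun _ ih => ih × Multiset (Set (ih × ℕ) × R)) ℓ

/-- The hypergraph relational 1-WL test `hrwl₁`, with the canonical injective `τ`
(pairing), starting from the node coloring `c`. -/
def RelHG.hrwl [DecidableEq V] (H : RelHG V R ar) (c : V → D) :
    (ℓ : ℕ) → V → WLC D R ℓ
  | 0 => c
  | ℓ + 1 => fun v =>
      ⟨RelHG.hrwl H c ℓ v,
        (H.incid v).val.map fun ei =>
          ({p : WLC D R ℓ × ℕ |
              ∃ j : Fin (ar ei.1.1), j ≠ ei.2 ∧
                p = (RelHG.hrwl H c ℓ (ei.1.2 j), (j : ℕ))},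
            ei.1.1)⟩

/-- A hypergraph relational MPNN (HR-MPNN): layer dimensions `d`, message spaces `M`,
aggregation spaces `A`, and arbitrary relation-specific message, aggregation and
update functions for every layer. -/
structure HRMPNN (R : Type) where
  d : ℕ → ℕ
  M : ℕ → Type
  A : ℕ → Type
  msg : (ℓ : ℕ) → R → Set ((Fin (d ℓ) → ℝ) × ℕ) → M ℓ
  agg : (ℓ : ℕ) → (Fin (d ℓ) → ℝ) → Multiset (M ℓ) → A ℓ
  up : (ℓ : ℕ) → (Fin (d ℓ) → ℝ) → A ℓ → Fin (d (ℓ + 1)) → ℝ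

/-- The feature maps `h⁽ℓ⁾` computed by an HR-MPNN on a relational hypergraph `H`
from the initial feature map `x`. -/
def HRMPNN.h [DecidableEq V] (net : HRMPNN R) (H : RelHG V R ar)
    (x : V → Fin (net.d 0) → ℝ) : (ℓ : ℕ) → V → Fin (net.d ℓ) → ℝ
  | 0 => x
  | ℓ + 1 => fun v =>
      net.up ℓ (HRMPNN.h net H x ℓ v)
        (net.agg ℓ (HRMPNN.h net H x ℓ v)
          ((H.incid v).val.map fun ei =>
            net.msg ℓ ei.1.1
              {p : (Fin (net.d ℓ) → ℝ) × ℕ |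
                ∃ j : Fin (ar ei.1.1), j ≠ ei.2 ∧
                  p = (HRMPNN.h net H x ℓ (ei.1.2 j), (j : ℕ))}))

/-- A query `q = (q, ũ, t)` on a relational hypergraph: a relation type `q`, a
querying position `t`, and an assignment `ũ` of nodes to the remaining positions. -/
structure Query (V R : Type) (ar : R → ℕ) where
  rel : R
  t : Fin (ar rel)
  u : {j : Fin (ar rel) // j ≠ t} → V

/-- A hypergraph conditional MPNN (HC-MPNN): an initialization function together with
arbitrary relation-specific message, aggregation and update functions per layer (the
message function may additionally depend on the query). -/
structure HCMPNN (V R : Type) (ar : R → ℕ) where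
  d : ℕ → ℕ
  M : ℕ → Type
  A : ℕ → Type
  init : V → Query V R ar → Fin (d 0) → ℝ
  msg : (ℓ : ℕ) → R → Set ((Fin (d ℓ) → ℝ) × ℕ) → Query V R ar → M ℓ
  agg : (ℓ : ℕ) → (Fin (d ℓ) → ℝ) → Multiset (M ℓ) → A ℓ
  up : (ℓ : ℕ) → (Fin (d ℓ) → ℝ) → A ℓ → Fin (d (ℓ + 1)) → ℝ

/-- The conditional feature maps `h⁽ℓ⁾_{·|q}` computed by an HC-MPNN on a relational
hypergraph `H` for the query `q`. -/
def HCMPNN.h [DecidableEq V] (net : HCMPNN V R ar) (H : RelHG V R ar)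
    (q : Query V R ar) : (ℓ : ℕ) → V → Fin (net.d ℓ) → ℝ
  | 0 => fun v => net.init v q
  | ℓ + 1 => fun v =>
      net.up ℓ (HCMPNN.h net H q ℓ v)
        (net.agg ℓ (HCMPNN.h net H q ℓ v)
          ((H.incid v).val.map fun ei =>
            net.msg ℓ ei.1.1
              {p : (Fin (net.d ℓ) → ℝ) × ℕ |
                ∃ j : Fin (ar ei.1.1), j ≠ ei.2 ∧
                  p = (HCMPNN.h net H q ℓ (ei.1.2 j), (j : ℕ))}
              q))

/-- A node coloring `c` satisfies generalized target node distinguishability with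
respect to the query `q = (q, ũ, t)`: nodes in `ũ` get colors different from all
nodes outside `ũ`, and distinct nodes occurring in `ũ` get distinct colors. -/
def GTND {D : Type} (c : V → D) (q : Query V R ar) : Prop :=
  (∀ (i : {j : Fin (ar q.rel) // j ≠ q.t}) (v : V),
      v ∉ Set.range q.u → c (q.u i) ≠ c v) ∧
  (∀ i j : {j : Fin (ar q.rel) // j ≠ q.t}, q.u i ≠ q.u j → c (q.u i) ≠ c (q.u j))


noncomputable section AuxHC

open Classical in
/-- Encode the `g`-class of `v` as a real number, injectively on classes. -/
noncomputable def fenc {V α : Type} [Fintype V] [Nonempty V] (g : V → α) (v : V) : ℝ :=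
  ((Fintype.equivFin V (Function.invFun g (g v)) : ℕ) : ℝ)

lemma fenc_eq_iff {V α : Type} [Fintype V] [Nonempty V] (g : V → α) (u v : V) :
    fenc g u = fenc g v ↔ g u = g v := by
  constructor
  · intro h
    have h1 : Fintype.equivFin V (Function.invFun g (g u))
        = Fintype.equivFin V (Function.invFun g (g v)) := by
      exact Fin.ext (Nat.cast_injective h)
    have h2 : Function.invFun g (g u) = Function.invFun g (g v) :=
      (Fintype.equivFin V).injective h1
    have hu : g (Function.invFun g (g u)) = g u := Function.invFun_eq ⟨u, rfl⟩
    have hv : g (Function.invFun g (g v)) = g v := Function.invFun_eq ⟨v, rfl⟩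
    rw [← hu, ← hv, h2]
  · intro h
    unfold fenc
    rw [h]

open Classical in
/-- The simulating HC-MPNN. -/
noncomputable def theNet {V R D : Type} [Fintype V] [DecidableEq V] [Nonempty V]
    {ar : R → ℕ} (H : RelHG V R ar) (c : V → D) : HCMPNN V R ar where
  d := fun _ => 1
  M := fun _ => Set ((Fin 1 → ℝ) × ℕ) × R
  A := fun _ => Multiset (Set ((Fin 1 → ℝ) × ℕ) × R)
  init := fun v _ _ => fenc (H.hrwl c 0) v
  msg := fun _ r S _ => (S, r)
  agg := fun _ _ m => m
  up := fun ℓ x a _ =>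
    if h : ∃ v : V, (x = fun _ => fenc (H.hrwl c ℓ) v) ∧
        a = (H.incid v).val.map (fun ei =>
          ({p : (Fin 1 → ℝ) × ℕ | ∃ j : Fin (ar ei.1.1), j ≠ ei.2 ∧
            p = ((fun _ => fenc (H.hrwl c ℓ) (ei.1.2 j)), (j : ℕ))}, ei.1.1))
    then fenc (H.hrwl c (ℓ+1)) (Classical.choose h) else 0

open Classical in
/-- Decoding map from encoded features back to WL colors. -/
noncomputable def Phi {V R D : Type} [Fintype V] [DecidableEq V] [Nonempty V]
    {ar : R → ℕ} (H : RelHG V R ar) (c : V → D) (ℓ : ℕ) :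
    (Fin 1 → ℝ) × ℕ → WLC D R ℓ × ℕ :=
  fun p =>
    (if h : ∃ w : V, p.1 = fun _ => fenc (H.hrwl c ℓ) w
      then H.hrwl c ℓ (Classical.choose h)
      else H.hrwl c ℓ (Classical.arbitrary V), p.2)

lemma Phi_spec {V R D : Type} [Fintype V] [DecidableEq V] [Nonempty V]
    {ar : R → ℕ} (H : RelHG V R ar) (c : V → D) (ℓ : ℕ) (w : V) (j : ℕ) :
    Phi H c ℓ ((fun _ => fenc (H.hrwl c ℓ) w), j) = (H.hrwl c ℓ w, j) := by
  unfold Phi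
  have h : ∃ w' : V, (fun _ : Fin 1 => fenc (H.hrwl c ℓ) w)
      = fun _ => fenc (H.hrwl c ℓ) w' := ⟨w, rfl⟩
  rw [dif_pos h]
  have := Classical.choose_spec h
  have hf : fenc (H.hrwl c ℓ) (Classical.choose h) = fenc (H.hrwl c ℓ) w :=
    (congrFun this.symm 0)
  have := (fenc_eq_iff (H.hrwl c ℓ) (Classical.choose h) w).mp hf
  simp [this]

/-- Decoding the message multiset recovers the WL multiset. -/
lemma phi_map {V R D : Type} [Fintype V] [DecidableEq V] [Nonempty V]
    {ar : R → ℕ} (H : RelHG V R ar) (c : V → D) (ℓ : ℕ) (v : V) :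
    ((H.incid v).val.map (fun ei =>
        ({p : (Fin 1 → ℝ) × ℕ | ∃ j : Fin (ar ei.1.1), j ≠ ei.2 ∧
          p = ((fun _ => fenc (H.hrwl c ℓ) (ei.1.2 j)), (j : ℕ))}, ei.1.1))).map
      (fun sr => (Phi H c ℓ '' sr.1, sr.2))
    = (H.incid v).val.map (fun ei =>
        ({p : WLC D R ℓ × ℕ | ∃ j : Fin (ar ei.1.1), j ≠ ei.2 ∧
          p = (H.hrwl c ℓ (ei.1.2 j), (j : ℕ))}, ei.1.1)) := by
  rw [Multiset.map_map]
  apply Multiset.map_congr rfl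
  intro ei _
  simp only [Function.comp_apply]
  refine Prod.ext ?_ rfl
  ext p
  constructor
  · rintro ⟨x, ⟨j, hj, rfl⟩, rfl⟩
    exact ⟨j, hj, Phi_spec H c ℓ (ei.1.2 j) j⟩
  · rintro ⟨j, hj, rfl⟩
    exact ⟨((fun _ => fenc (H.hrwl c ℓ) (ei.1.2 j)), (j : ℕ)), ⟨j, hj, rfl⟩,
      Phi_spec H c ℓ (ei.1.2 j) j⟩

open Classical in
/-- The feature map of the simulating network is the encoded WL coloring. -/
lemma theNet_h {V R D : Type} [Fintype V] [DecidableEq V] [Nonempty V]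
    {ar : R → ℕ} (H : RelHG V R ar) (c : V → D) (q : Query V R ar) :
    ∀ ℓ (v : V), (theNet H c).h H q ℓ v = fun _ => fenc (H.hrwl c ℓ) v := by
  intro ℓ
  induction ℓ with
  | zero => intro v; rfl
  | succ ℓ ih =>
    intro v
    show (theNet H c).up ℓ ((theNet H c).h H q ℓ v)
      ((theNet H c).agg ℓ ((theNet H c).h H q ℓ v)
        ((H.incid v).val.map fun ei =>
          (theNet H c).msg ℓ ei.1.1
            {p : (Fin 1 → ℝ) × ℕ | ∃ j : Fin (ar ei.1.1), j ≠ ei.2 ∧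
              p = ((theNet H c).h H q ℓ (ei.1.2 j), (j : ℕ))} q)) = _
    have hset : ∀ ei : Σ e : Σ r : R, Fin (ar r) → V, Fin (ar e.1),
        {p : (Fin 1 → ℝ) × ℕ | ∃ j : Fin (ar ei.1.1), j ≠ ei.2 ∧
            p = ((theNet H c).h H q ℓ (ei.1.2 j), (j : ℕ))}
        = {p : (Fin 1 → ℝ) × ℕ | ∃ j : Fin (ar ei.1.1), j ≠ ei.2 ∧
            p = ((fun _ => fenc (H.hrwl c ℓ) (ei.1.2 j)), (j : ℕ))} := by
      intro ei; ext p
      constructor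
      · rintro ⟨j, hj, rfl⟩
        exact ⟨j, hj, congrArg (fun f => (f, (j : ℕ))) (ih (ei.1.2 j))⟩
      · rintro ⟨j, hj, rfl⟩
        exact ⟨j, hj, congrArg (fun f => (f, (j : ℕ))) (ih (ei.1.2 j)).symm⟩

    show (theNet H c).up ℓ _ _ = _
    rw [ih v]
    have hmsg : ((H.incid v).val.map fun ei =>
        (theNet H c).msg ℓ ei.1.1
          {p : (Fin 1 → ℝ) × ℕ | ∃ j : Fin (ar ei.1.1), j ≠ ei.2 ∧
            p = ((theNet H c).h H q ℓ (ei.1.2 j), (j : ℕ))} q)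
        = (H.incid v).val.map (fun ei =>
          ({p : (Fin 1 → ℝ) × ℕ | ∃ j : Fin (ar ei.1.1), j ≠ ei.2 ∧
            p = ((fun _ => fenc (H.hrwl c ℓ) (ei.1.2 j)), (j : ℕ))}, ei.1.1)) := by
      apply Multiset.map_congr rfl
      intro ei _
      show ({p : (Fin 1 → ℝ) × ℕ | _}, ei.1.1) = _
      rw [hset ei]
    rw [hmsg]
    show (fun _ => if h : ∃ v' : V,
        ((fun _ : Fin 1 => fenc (H.hrwl c ℓ) v) = fun _ => fenc (H.hrwl c ℓ) v') ∧
        (H.incid v).val.map (fun ei =>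
          ({p : (Fin 1 → ℝ) × ℕ | ∃ j : Fin (ar ei.1.1), j ≠ ei.2 ∧
            p = ((fun _ => fenc (H.hrwl c ℓ) (ei.1.2 j)), (j : ℕ))}, ei.1.1))
        = (H.incid v').val.map (fun ei =>
          ({p : (Fin 1 → ℝ) × ℕ | ∃ j : Fin (ar ei.1.1), j ≠ ei.2 ∧
            p = ((fun _ => fenc (H.hrwl c ℓ) (ei.1.2 j)), (j : ℕ))}, ei.1.1))
      then fenc (H.hrwl c (ℓ+1)) (Classical.choose h) else 0) = _
    have hex : ∃ v' : V,
        ((fun _ : Fin 1 => fenc (H.hrwl c ℓ) v) = fun _ => fenc (H.hrwl c ℓ) v') ∧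
        (H.incid v).val.map (fun ei =>
          ({p : (Fin 1 → ℝ) × ℕ | ∃ j : Fin (ar ei.1.1), j ≠ ei.2 ∧
            p = ((fun _ => fenc (H.hrwl c ℓ) (ei.1.2 j)), (j : ℕ))}, ei.1.1))
        = (H.incid v').val.map (fun ei =>
          ({p : (Fin 1 → ℝ) × ℕ | ∃ j : Fin (ar ei.1.1), j ≠ ei.2 ∧
            p = ((fun _ => fenc (H.hrwl c ℓ) (ei.1.2 j)), (j : ℕ))}, ei.1.1)) :=
      ⟨v, rfl, rfl⟩
    funext i
    rw [dif_pos hex]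
    obtain ⟨h1, h2⟩ := Classical.choose_spec hex
    set v' := Classical.choose hex with hv'
    -- show fenc (hrwl (ℓ+1)) v' = fenc (hrwl (ℓ+1)) v
    have hcol : H.hrwl c ℓ v = H.hrwl c ℓ v' :=
      (fenc_eq_iff (H.hrwl c ℓ) v v').mp (congrFun h1 0)
    have hmul : (H.incid v).val.map (fun ei =>
          ({p : WLC D R ℓ × ℕ | ∃ j : Fin (ar ei.1.1), j ≠ ei.2 ∧
            p = (H.hrwl c ℓ (ei.1.2 j), (j : ℕ))}, ei.1.1))
        = (H.incid v').val.map (fun ei =>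
          ({p : WLC D R ℓ × ℕ | ∃ j : Fin (ar ei.1.1), j ≠ ei.2 ∧
            p = (H.hrwl c ℓ (ei.1.2 j), (j : ℕ))}, ei.1.1)) := by
      rw [← phi_map H c ℓ v, ← phi_map H c ℓ v', h2]
    have hwl : H.hrwl c (ℓ+1) v' = H.hrwl c (ℓ+1) v := by
      show (⟨H.hrwl c ℓ v', _⟩ : WLC D R ℓ ×
          Multiset (Set (WLC D R ℓ × ℕ) × R)) = ⟨H.hrwl c ℓ v, _⟩
      apply Prod.ext_iff.mpr
      exact ⟨hcol.symm, hmul.symm⟩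
    exact (fenc_eq_iff (H.hrwl c (ℓ+1)) v' v).mpr hwl

end AuxHC

/-- Let `G = (V, E, R, c)` be a relational hypergraph and `q` a query
such that `c` satisfies generalized target node distinguishability w.r.t. `q`. Then
for every `L ≥ 0` there exists an HC-MPNN with `L` layers such that for all
`0 ≤ ℓ ≤ L`, `hrwl₁⁽ℓ⁾ ≡ h_q⁽ℓ⁾` (same partition of `V` at every layer). -/
theorem exists_HCMPNN_matching_hrwl
    {V R D : Type} [Fintype V] [DecidableEq V] [Fintype R] [DecidableEq R]
    {ar : R → ℕ} (H : RelHG V R ar) (c : V → D)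
    (q : Query V R ar) (hgtnd : GTND c q)
    (L : ℕ) :
    ∃ net : HCMPNN V R ar,
      ∀ ℓ ≤ L, ∀ u v : V,
        H.hrwl c ℓ u = H.hrwl c ℓ v ↔ net.h H q ℓ u = net.h H q ℓ v := by
  rcases isEmpty_or_nonempty V with hV | hV
  · refine ⟨⟨fun _ => 1, fun _ => Unit, fun _ => Unit, fun _ _ _ => 0,
      fun _ _ _ _ => (), fun _ _ _ => (), fun _ _ _ _ => 0⟩, ?_⟩
    intro ℓ _ u
    exact hV.elim u
  · refine ⟨theNet H c, ?_⟩
    intro ℓ _ u v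
    rw [theNet_h H c q ℓ u, theNet_h H c q ℓ v]
    rw [← fenc_eq_iff (H.hrwl c ℓ) u v]
    constructor
    · intro h; rw [h]
    · intro h; exact congrFun h (0 : Fin 1)
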